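/- For every t ∈ ℝ, although each of the two kernels below blows up like 1/s² along the diagonal, their combination has a finite limit: lim_{s→0, s≠0} [ G^B_{n_x n_y n_y n_y} + 3·G^B_{n_x n_y τ_y τ_y} ](γ(t), γ(t+s)) = −3κ(t)²/(4π). Here, with r = x − γ(s′), n_x = n(t), n_y = n(s′), τ_y = τ(s′): G^B_{n_x n_y n_y n_y}(x, γ(s′)) = −(3/(4π))(n_x·n_y)/‖r‖² + (3/(2π))(r·n_y)(r·n_x)/‖r‖⁴ + (3/(2π))(r·n_y)²(n_x·n_y)/‖r‖⁴ − (2/π)(r·n_y)³(r·n_x)/‖r‖⁶, and G^B_{n_x n_y τ_y τ_y}(x, γ(s′)) = (1/(2π))(n_x·n_y)(r·τ_y)²/‖r‖⁴ + (1/π)(r·n_y)(r·τ_y)(n_x·τ_y)/‖r‖⁴ − (2/π)(r·n_y)(r·τ_y)²(r·n_x)/‖r‖⁶ − (1/(4π))(n_x·n_y)/‖r‖² + (1/(2π))(r·n_y)(r·n_x)/‖r‖⁴, evaluated at x = γ(t). -/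

import Mathlib

open Real Filter Topology MeasureTheory

noncomputable section

/-- Euclidean dot product on `ℝ × ℝ`. -/
def dot2 (v w : ℝ × ℝ) : ℝ := v.1 * w.1 + v.2 * w.2

/-- Unit tangent vector `τ(s) = γ′(s)`. -/
def tang (γ : ℝ → ℝ × ℝ) (s : ℝ) : ℝ × ℝ := deriv γ s

/-- Unit normal vector `n(s) = (τ₂(s), −τ₁(s))`. -/
def nor (γ : ℝ → ℝ × ℝ) (s : ℝ) : ℝ × ℝ := ((deriv γ s).2, -(deriv γ s).1)

/-- Signed curvature `κ(s) = −γ″(s)·n(s)`. -/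
def curv (γ : ℝ → ℝ × ℝ) (s : ℝ) : ℝ := -(dot2 (deriv (deriv γ) s) (nor γ s))

/-- Explicit formula for `G^B_{n_x n_y n_y n_y}(x, γ(s'))`, with `r = x − γ(s')`,
`n_x = n(t)`, `n_y = n(s')`. -/
def GB_nx_ny_ny_ny (γ : ℝ → ℝ × ℝ) (t : ℝ) (x : ℝ × ℝ) (s' : ℝ) : ℝ :=
  -(3 / (4 * π)) * dot2 (nor γ t) (nor γ s') / dot2 (x - γ s') (x - γ s')
    + 3 / (2 * π) * dot2 (x - γ s') (nor γ s') * dot2 (x - γ s') (nor γ t)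
      / (dot2 (x - γ s') (x - γ s')) ^ 2
    + 3 / (2 * π) * (dot2 (x - γ s') (nor γ s')) ^ 2 * dot2 (nor γ t) (nor γ s')
      / (dot2 (x - γ s') (x - γ s')) ^ 2
    - 2 / π * (dot2 (x - γ s') (nor γ s')) ^ 3 * dot2 (x - γ s') (nor γ t)
      / (dot2 (x - γ s') (x - γ s')) ^ 3

/-- Explicit formula for `G^B_{n_x n_y τ_y τ_y}(x, γ(s'))`, with `r = x − γ(s')`,
`n_x = n(t)`, `n_y = n(s')`, `τ_y = τ(s')`. -/
def GB_nx_ny_ty_ty (γ : ℝ → ℝ × ℝ) (t : ℝ) (x : ℝ × ℝ) (s' : ℝ) : ℝ :=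
  1 / (2 * π) * dot2 (nor γ t) (nor γ s') * (dot2 (x - γ s') (tang γ s')) ^ 2
      / (dot2 (x - γ s') (x - γ s')) ^ 2
    + 1 / π * dot2 (x - γ s') (nor γ s') * dot2 (x - γ s') (tang γ s')
        * dot2 (nor γ t) (tang γ s') / (dot2 (x - γ s') (x - γ s')) ^ 2
    - 2 / π * dot2 (x - γ s') (nor γ s') * (dot2 (x - γ s') (tang γ s')) ^ 2
        * dot2 (x - γ s') (nor γ t) / (dot2 (x - γ s') (x - γ s')) ^ 3
    - 1 / (4 * π) * dot2 (nor γ t) (nor γ s') / dot2 (x - γ s') (x - γ s')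
    + 1 / (2 * π) * dot2 (x - γ s') (nor γ s') * dot2 (x - γ s') (nor γ t)
      / (dot2 (x - γ s') (x - γ s')) ^ 2

lemma hasDerivAt_fst' {f : ℝ → ℝ × ℝ} {f' : ℝ × ℝ} {x : ℝ}
    (h : HasDerivAt f f' x) : HasDerivAt (fun s => (f s).1) f'.1 x := by
  simpa using (h.hasFDerivAt.fst).hasDerivAt

lemma hasDerivAt_snd' {f : ℝ → ℝ × ℝ} {f' : ℝ × ℝ} {x : ℝ}
    (h : HasDerivAt f f' x) : HasDerivAt (fun s => (f s).2) f'.2 x := by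
  simpa using (h.hasFDerivAt.snd).hasDerivAt

lemma hasDerivAt_dot2 {f g : ℝ → ℝ × ℝ} {f' g' : ℝ × ℝ} {x : ℝ}
    (hf : HasDerivAt f f' x) (hg : HasDerivAt g g' x) :
    HasDerivAt (fun s => dot2 (f s) (g s)) (dot2 f' (g x) + dot2 (f x) g') x := by
  have h := ((hasDerivAt_fst' hf).mul (hasDerivAt_fst' hg)).add
    ((hasDerivAt_snd' hf).mul (hasDerivAt_snd' hg))
  refine h.congr_deriv ?_
  unfold dot2; ring

lemma key {f : ℝ → ℝ} {f' : ℝ} (h : HasDerivAt f f' 0) (h0 : f 0 = 0) :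
    Tendsto (fun s => f s / s) (𝓝[≠] (0:ℝ)) (𝓝 f') := by
  have h2 := hasDerivAt_iff_tendsto_slope.mp h
  refine h2.congr' ?_
  filter_upwards [self_mem_nhdsWithin] with s hs
  simp [slope_def_field, h0]

lemma key2 {f f1 : ℝ → ℝ} {f2 : ℝ}
    (hf : ∀ s, HasDerivAt f (f1 s) s) (hf1 : HasDerivAt f1 f2 0)
    (h0 : f 0 = 0) (h1 : f1 0 = 0) :
    Tendsto (fun s => f s / s ^ 2) (𝓝[≠] (0:ℝ)) (𝓝 (f2 / 2)) := by
  apply HasDerivAt.lhopital_zero_nhdsNE (f' := f1) (g' := fun s => 2 * s)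
  · filter_upwards with s using hf s
  · filter_upwards with s
    simpa using hasDerivAt_pow 2 s
  · filter_upwards [self_mem_nhdsWithin] with s hs
    simpa using hs
  · have h3 : Tendsto f (𝓝 (0:ℝ)) (𝓝 (f 0)) := (hf 0).continuousAt
    rw [h0] at h3
    exact h3.mono_left nhdsWithin_le_nhds
  · have h3 : Tendsto (fun s : ℝ => s ^ 2) (𝓝 0) (𝓝 0) := by
      simpa using (continuous_pow 2).tendsto (0:ℝ)
    exact h3.mono_left nhdsWithin_le_nhds
  · have h3 : Tendsto (fun s => f1 s / s / 2) (𝓝[≠] (0:ℝ)) (𝓝 (f2 / 2)) :=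
      (key hf1 h1).div_const 2
    refine h3.congr' ?_
    filter_upwards [self_mem_nhdsWithin] with s hs
    field_simp

set_option maxHeartbeats 1000000 in
theorem stmt4 (L : ℝ) (hL : 0 < L) (γ : ℝ → ℝ × ℝ)
    (hγ : ContDiff ℝ (⊤ : ℕ∞) γ)
    (hper : ∀ s, γ (s + L) = γ s)
    (hinj : Set.InjOn γ (Set.Ico 0 L))
    (harc : ∀ s, dot2 (deriv γ s) (deriv γ s) = 1)
    (t : ℝ) :
    Tendsto
      (fun s : ℝ =>
        GB_nx_ny_ny_ny γ t (γ t) (t + s) + 3 * GB_nx_ny_ty_ty γ t (γ t) (t + s))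
      (𝓝[≠] (0 : ℝ)) (𝓝 (-(3 * (curv γ t) ^ 2) / (4 * π))) := by
  have hγdiff : Differentiable ℝ γ := hγ.differentiable (by simp)
  have hd1 : ContDiff ℝ (⊤:ℕ∞) (deriv γ) := (contDiff_infty_iff_deriv.mp hγ).2
  have hd2 : ContDiff ℝ (⊤:ℕ∞) (deriv (deriv γ)) := (contDiff_infty_iff_deriv.mp hd1).2
  have hγd : ∀ u, HasDerivAt γ (deriv γ u) u := fun u => (hγdiff u).hasDerivAt
  have hd1d : ∀ u, HasDerivAt (deriv γ) (deriv (deriv γ) u) u :=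
    fun u => (hd1.differentiable (by simp) u).hasDerivAt
  have hd2d : ∀ u, HasDerivAt (deriv (deriv γ)) (deriv (deriv (deriv γ)) u) u :=
    fun u => (hd2.differentiable (by simp) u).hasDerivAt
  have shift : ∀ (f f' : ℝ → ℝ × ℝ), (∀ u, HasDerivAt f (f' u) u) →
      ∀ s, HasDerivAt (fun s => f (t + s)) (f' (t + s)) s := by
    intro f f' h s
    exact (h (t + s)).comp_const_add t s
  have hTs := shift γ (deriv γ) hγd
  have hAs := shift (deriv γ) (deriv (deriv γ)) hd1d
  have hBs := shift (deriv (deriv γ)) (deriv (deriv (deriv γ))) hd2d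
  have hΔd : ∀ s, HasDerivAt (fun s => γ t - γ (t + s)) (-(deriv γ (t + s))) s :=
    fun s => (hTs s).const_sub (γ t)
  have hnors : ∀ s, HasDerivAt (fun s => ((deriv γ (t+s)).2, -(deriv γ (t+s)).1))
      ((deriv (deriv γ) (t+s)).2, -(deriv (deriv γ) (t+s)).1) s :=
    fun s => HasDerivAt.prodMk (hasDerivAt_snd' (hAs s)) (hasDerivAt_fst' (hAs s)).neg
  have hnorA : ∀ s, HasDerivAt (fun s => ((deriv (deriv γ) (t+s)).2, -(deriv (deriv γ) (t+s)).1))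
      ((deriv (deriv (deriv γ)) (t+s)).2, -(deriv (deriv (deriv γ)) (t+s)).1) s :=
    fun s => HasDerivAt.prodMk (hasDerivAt_snd' (hBs s)) (hasDerivAt_fst' (hBs s)).neg
  -- p and its derivative
  have hp : ∀ s, HasDerivAt (fun s => dot2 (γ t - γ (t+s)) (deriv γ (t+s)))
      (dot2 (-(deriv γ (t+s))) (deriv γ (t+s))
        + dot2 (γ t - γ (t+s)) (deriv (deriv γ) (t+s))) s :=
    fun s => hasDerivAt_dot2 (hΔd s) (hAs s)
  have hp0 : HasDerivAt (fun s => dot2 (γ t - γ (t+s)) (deriv γ (t+s))) (-1) 0 := by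
    have h := hp 0
    have ha := harc t
    simp only [dot2] at ha
    convert h using 1
    simp [dot2]
    linarith
  have hP : Tendsto (fun s => dot2 (γ t - γ (t+s)) (tang γ (t+s)) / s)
      (𝓝[≠] (0:ℝ)) (𝓝 (-1)) := by
    simp only [tang]
    exact key hp0 (by simp [dot2])
  -- d
  have hdd : ∀ s, HasDerivAt (fun s => dot2 ((deriv γ t).2, -(deriv γ t).1) (deriv γ (t+s)))
      (dot2 (0:ℝ×ℝ) (deriv γ (t+s))
        + dot2 ((deriv γ t).2, -(deriv γ t).1) (deriv (deriv γ) (t+s))) s :=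
    fun s => hasDerivAt_dot2 (hasDerivAt_const s _) (hAs s)
  have hd0 : HasDerivAt (fun s => dot2 ((deriv γ t).2, -(deriv γ t).1) (deriv γ (t+s)))
      (-(curv γ t)) 0 := by
    have h := hdd 0
    convert h using 1
    simp [dot2, curv, nor]
    ring
  have hD : Tendsto (fun s => dot2 (nor γ t) (tang γ (t+s)) / s)
      (𝓝[≠] (0:ℝ)) (𝓝 (-(curv γ t))) := by
    simp only [tang, nor]
    exact key hd0 (by simp [dot2]; ring)
  -- q
  have hq : ∀ s, HasDerivAt
      (fun s => dot2 (γ t - γ (t+s)) ((deriv γ (t+s)).2, -(deriv γ (t+s)).1))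
      (dot2 (γ t - γ (t+s)) ((deriv (deriv γ) (t+s)).2, -(deriv (deriv γ) (t+s)).1)) s := by
    intro s
    have h := hasDerivAt_dot2 (hΔd s) (hnors s)
    convert h using 1
    simp [dot2]
    ring
  have hq1 : HasDerivAt
      (fun s => dot2 (γ t - γ (t+s)) ((deriv (deriv γ) (t+s)).2, -(deriv (deriv γ) (t+s)).1))
      (-(curv γ t)) 0 := by
    have h := hasDerivAt_dot2 (hΔd 0) (hnorA 0)
    convert h using 1
    simp [dot2, curv, nor]
    ring
  have hQ : Tendsto (fun s => dot2 (γ t - γ (t+s)) (nor γ (t+s)) / s ^ 2)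
      (𝓝[≠] (0:ℝ)) (𝓝 (-(curv γ t) / 2)) := by
    simp only [nor]
    exact key2 hq hq1 (by simp [dot2]) (by simp [dot2])
  -- R
  have hR : ∀ s, HasDerivAt (fun s => dot2 (γ t - γ (t+s)) (γ t - γ (t+s)))
      (-(2 * dot2 (γ t - γ (t+s)) (deriv γ (t+s)))) s := by
    intro s
    have h := hasDerivAt_dot2 (hΔd s) (hΔd s)
    convert h using 1
    simp [dot2]
    ring
  have hR1 : HasDerivAt (fun s => -(2 * dot2 (γ t - γ (t+s)) (deriv γ (t+s)))) 2 0 := by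
    have h := ((hp 0).const_mul (2:ℝ)).neg
    have ha := harc t
    simp only [dot2] at ha
    refine h.congr_deriv ?_
    simp [dot2]
    linarith
  have hRs : Tendsto (fun s => dot2 (γ t - γ (t+s)) (γ t - γ (t+s)) / s ^ 2)
      (𝓝[≠] (0:ℝ)) (𝓝 1) := by
    have h := key2 hR hR1 (by simp [dot2]) (by simp [dot2])
    norm_num at h
    exact h
  -- c
  have hTc : Continuous (deriv γ) := hd1.continuous
  have hCc : Continuous (fun s => dot2 (nor γ t) (nor γ (t+s))) := by
    simp only [dot2, nor]
    fun_prop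
  have hc0 : dot2 (nor γ t) (nor γ (t+0)) = 1 := by
    have ha := harc t
    simp only [dot2] at ha
    simp [dot2, nor]
    linarith
  have hC : Tendsto (fun s => dot2 (nor γ t) (nor γ (t + s))) (𝓝[≠] (0:ℝ)) (𝓝 1) := by
    have h1 : Tendsto (fun s => dot2 (nor γ t) (nor γ (t + s))) (𝓝 (0:ℝ))
        (𝓝 (dot2 (nor γ t) (nor γ (t+0)))) := hCc.tendsto 0
    rw [hc0] at h1
    exact h1.mono_left nhdsWithin_le_nhds
  -- eventual nonvanishing of R/s^2
  have hRne : ∀ᶠ s in 𝓝[≠] (0:ℝ), dot2 (γ t - γ (t+s)) (γ t - γ (t+s)) / s ^ 2 ≠ 0 :=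
    hRs.eventually_ne one_ne_zero
  have hcomb : Tendsto
      (fun s : ℝ => 1 / π *
        ((4 * (dot2 (γ t - γ (t+s)) (nor γ (t+s)) / s ^ 2)
              * (dot2 (γ t - γ (t+s)) (tang γ (t+s)) / s)
              * (dot2 (nor γ t) (tang γ (t+s)) / s)
            + (dot2 (γ t - γ (t+s)) (nor γ (t+s)) / s ^ 2) ^ 2
              * dot2 (nor γ t) (nor γ (t+s)))
            / (dot2 (γ t - γ (t+s)) (γ t - γ (t+s)) / s ^ 2) ^ 2
          - 4 * (dot2 (γ t - γ (t+s)) (nor γ (t+s)) / s ^ 2)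
              * (dot2 (γ t - γ (t+s)) (tang γ (t+s)) / s) ^ 2
              * (dot2 (γ t - γ (t+s)) (tang γ (t+s)) / s
                  * (dot2 (nor γ t) (tang γ (t+s)) / s)
                + dot2 (γ t - γ (t+s)) (nor γ (t+s)) / s ^ 2
                  * dot2 (nor γ t) (nor γ (t+s)))
            / (dot2 (γ t - γ (t+s)) (γ t - γ (t+s)) / s ^ 2) ^ 3))
      (𝓝[≠] (0:ℝ))
      (𝓝 (1 / π *
        ((4 * (-curv γ t / 2) * -1 * -curv γ t + (-curv γ t / 2) ^ 2 * 1) / 1 ^ 2 -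
          4 * (-curv γ t / 2) * (-1) ^ 2 * (-1 * -curv γ t + -curv γ t / 2 * 1) / 1 ^ 3))) :=
    Tendsto.const_mul (1/π)
      ((((((hQ.const_mul 4).mul hP).mul hD).add ((hQ.pow 2).mul hC)).div (hRs.pow 2)
          (by norm_num)).sub
        (((((hQ.const_mul 4).mul (hP.pow 2)).mul ((hP.mul hD).add (hQ.mul hC))).div (hRs.pow 3)
          (by norm_num))))
  have h2 : Tendsto
      (fun s : ℝ =>
        GB_nx_ny_ny_ny γ t (γ t) (t + s) + 3 * GB_nx_ny_ty_ty γ t (γ t) (t + s))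
      (𝓝[≠] (0 : ℝ))
      (𝓝 (1 / π *
        ((4 * (-curv γ t / 2) * -1 * -curv γ t + (-curv γ t / 2) ^ 2 * 1) / 1 ^ 2 -
          4 * (-curv γ t / 2) * (-1) ^ 2 * (-1 * -curv γ t + -curv γ t / 2 * 1) / 1 ^ 3))) := by
    refine Filter.Tendsto.congr' ?_ hcomb
    filter_upwards [self_mem_nhdsWithin, hRne] with s hs hR0
    have hs' : s ≠ 0 := hs
    have hRne' : dot2 (γ t - γ (t+s)) (γ t - γ (t+s)) ≠ 0 := by
      intro h; rw [h] at hR0; simp at hR0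
    have ha := harc (t+s)
    simp only [dot2] at ha
    have hpq : dot2 (γ t - γ (t+s)) (γ t - γ (t+s))
        = dot2 (γ t - γ (t+s)) (tang γ (t+s)) ^ 2
          + dot2 (γ t - γ (t+s)) (nor γ (t+s)) ^ 2 := by
      simp only [dot2, tang, nor, Prod.fst_sub, Prod.snd_sub]
      linear_combination (-(((γ t).1 - (γ (t+s)).1)^2 + ((γ t).2 - (γ (t+s)).2)^2)) * ha
    have hA1 : dot2 (γ t - γ (t+s)) (nor γ t)
        = dot2 (γ t - γ (t+s)) (tang γ (t+s)) * dot2 (nor γ t) (tang γ (t+s))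
          + dot2 (γ t - γ (t+s)) (nor γ (t+s)) * dot2 (nor γ t) (nor γ (t+s)) := by
      simp only [dot2, tang, nor, Prod.fst_sub, Prod.snd_sub]
      linear_combination (-(((γ t).1 - (γ (t+s)).1) * (deriv γ t).2
        - ((γ t).2 - (γ (t+s)).2) * (deriv γ t).1)) * ha
    have hpqne : dot2 (γ t - γ (t+s)) (tang γ (t+s)) ^ 2
        + dot2 (γ t - γ (t+s)) (nor γ (t+s)) ^ 2 ≠ 0 := hpq ▸ hRne'
    simp only [GB_nx_ny_ny_ny, GB_nx_ny_ty_ty]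
    rw [hA1, hpq]
    generalize dot2 (nor γ t) (nor γ (t+s)) = c at hpqne ⊢
    generalize dot2 (nor γ t) (tang γ (t+s)) = dd at hpqne ⊢
    generalize dot2 (γ t - γ (t+s)) (tang γ (t+s)) = p at hpqne ⊢
    generalize dot2 (γ t - γ (t+s)) (nor γ (t+s)) = q at hpqne ⊢
    have hπ : (π:ℝ) ≠ 0 := Real.pi_ne_zero
    field_simp
    ring
  convert h2 using 2
  have hπ : (π:ℝ) ≠ 0 := Real.pi_ne_zero
  field_simp
  ring
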